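/- Let X ∈ ℝ^{n×n} be symmetric with eigenvalue decomposition X = Σ_{i=1}^n λ_i v_i v_iᵀ, where λ_1 ≥ λ_2 ≥ … ≥ λ_n are the eigenvalues and v_1, …, v_n form an orthonormal basis of corresponding eigenvectors. For κ ≤ n, set X̂ = Σ_{i=1}^κ max{0, λ_i} v_i v_iᵀ. Then X̂ is a projection of X onto D = {Z ∈ ℝ^{n×n} : Z symmetric positive semidefinite, rank(Z) ≤ κ} with respect to the Frobenius norm; i.e., X̂ ∈ D and ‖X̂ − X‖_F ≤ ‖Z − X‖_F for every Z ∈ D. -/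

import Mathlib

noncomputable section

open Matrix

/-- The Frobenius norm of a real matrix. -/
def frobNorm {n : ℕ} (A : Matrix (Fin n) (Fin n) ℝ) : ℝ :=
  Real.sqrt (∑ i, ∑ j, A i j ^ 2)

noncomputable section
open Matrix
namespace EigProj

variable {n : ℕ}

def ip (A B : Matrix (Fin n) (Fin n) ℝ) : ℝ := ∑ i, ∑ j, A i j * B i j

lemma ip_eq_trace (A B : Matrix (Fin n) (Fin n) ℝ) : ip A B = (Aᵀ * B).trace := by
  simp [ip, trace, mul_apply, diag]
  rw [Finset.sum_comm]

lemma ip_self_nonneg (A : Matrix (Fin n) (Fin n) ℝ) : 0 ≤ ip A A := by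
  apply Finset.sum_nonneg; intro i _
  exact Finset.sum_nonneg fun j _ => mul_self_nonneg _

lemma ip_comm (A B : Matrix (Fin n) (Fin n) ℝ) : ip A B = ip B A := by
  simp [ip, mul_comm]

lemma ip_sub_sub (X Y : Matrix (Fin n) (Fin n) ℝ) :
    ip (X - Y) (X - Y) = ip X X - 2 * ip X Y + ip Y Y := by
  have h : ∀ a b : ℝ, (a - b) * (a - b) = a * a - 2 * (a * b) + b * b := by intros; ring
  simp_rw [ip, Matrix.sub_apply, h, Finset.sum_add_distrib, Finset.sum_sub_distrib, Finset.mul_sum]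

lemma frobNorm_sq (A : Matrix (Fin n) (Fin n) ℝ) : frobNorm A = Real.sqrt (ip A A) := by
  simp [frobNorm, ip, sq]

lemma frob_le_of_ip_le {A B : Matrix (Fin n) (Fin n) ℝ} (h : ip A A ≤ ip B B) :
    frobNorm A ≤ frobNorm B := by
  rw [frobNorm_sq, frobNorm_sq]; exact Real.sqrt_le_sqrt h

lemma mul_vvT (M : Matrix (Fin n) (Fin n) ℝ) (a b : Fin n → ℝ) :
    M * vecMulVec a b = vecMulVec (M *ᵥ a) b := by
  ext i j
  simp [mul_apply, vecMulVec_apply, mulVec, dotProduct, Finset.sum_mul]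
  exact Finset.sum_congr rfl fun l _ => by ring

lemma vvT_mul_vvT (a b c d : Fin n → ℝ) :
    vecMulVec a b * vecMulVec c d = (b ⬝ᵥ c) • vecMulVec a d := by
  ext i j
  simp [mul_apply, vecMulVec_apply, dotProduct, Finset.sum_mul, Finset.mul_sum]
  exact Finset.sum_congr rfl fun l _ => by ring

lemma trace_vvT (a b : Fin n → ℝ) : (vecMulVec a b).trace = a ⬝ᵥ b := by
  simp [trace, diag, vecMulVec_apply, dotProduct]

lemma trace_mul_vvT (M : Matrix (Fin n) (Fin n) ℝ) (a b : Fin n → ℝ) :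
    (M * vecMulVec a b).trace = b ⬝ᵥ (M *ᵥ a) := by
  rw [mul_vvT, trace_vvT, dotProduct_comm]

def Mgen {m : ℕ} (u : Fin m → Fin n → ℝ) (c : Fin m → ℝ) : Matrix (Fin n) (Fin n) ℝ :=
  ∑ i, c i • vecMulVec (u i) (u i)

lemma Mgen_transpose {m : ℕ} (u : Fin m → Fin n → ℝ) (c : Fin m → ℝ) :
    (Mgen u c)ᵀ = Mgen u c := by
  ext i j
  rw [transpose_apply]
  simp only [Mgen, Finset.sum_apply, Matrix.sum_apply, Matrix.smul_apply, vecMulVec_apply, smul_eq_mul]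
  exact Finset.sum_congr rfl fun l _ => by ring

lemma Mgen_mul_Mgen {m k : ℕ} (u : Fin m → Fin n → ℝ) (w : Fin k → Fin n → ℝ)
    (c : Fin m → ℝ) (d : Fin k → ℝ) :
    Mgen u c * Mgen w d
      = ∑ i, ∑ j, (c i * d j * (u i ⬝ᵥ w j)) • vecMulVec (u i) (w j) := by
  rw [Mgen, Mgen, Finset.sum_mul]
  refine Finset.sum_congr rfl fun i _ => ?_
  rw [Finset.mul_sum]
  refine Finset.sum_congr rfl fun j _ => ?_
  rw [smul_mul_assoc, mul_smul_comm, vvT_mul_vvT, smul_smul, smul_smul]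

lemma trace_Mgen_mul_Mgen {m k : ℕ} (u : Fin m → Fin n → ℝ) (w : Fin k → Fin n → ℝ)
    (c : Fin m → ℝ) (d : Fin k → ℝ) :
    (Mgen u c * Mgen w d).trace = ∑ i, ∑ j, c i * d j * (u i ⬝ᵥ w j) ^ 2 := by
  rw [Mgen_mul_Mgen, trace_sum]
  refine Finset.sum_congr rfl fun i _ => ?_
  rw [trace_sum]
  refine Finset.sum_congr rfl fun j _ => ?_
  rw [trace_smul, trace_vvT, smul_eq_mul, sq]
  ring

lemma trace_mul_Mgen {m : ℕ} (Z : Matrix (Fin n) (Fin n) ℝ) (u : Fin m → Fin n → ℝ)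
    (c : Fin m → ℝ) :
    (Z * Mgen u c).trace = ∑ j, c j * (u j ⬝ᵥ (Z *ᵥ u j)) := by
  rw [Mgen, Finset.mul_sum, trace_sum]
  refine Finset.sum_congr rfl fun j _ => ?_
  rw [mul_smul_comm, trace_smul, trace_mul_vvT, smul_eq_mul]

lemma dot_Mgen {m : ℕ} (u : Fin m → Fin n → ℝ) (c : Fin m → ℝ) (x : Fin n → ℝ) :
    x ⬝ᵥ (Mgen u c *ᵥ x) = ∑ i, c i * (u i ⬝ᵥ x) ^ 2 := by
  have h1 : vecMulVec x x = Mgen (fun _ : Fin 1 => x) (fun _ => 1) := by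
    simp [Mgen]
  rw [← trace_mul_vvT, h1, trace_Mgen_mul_Mgen]
  simp

lemma ip_proj_le (X P : Matrix (Fin n) (Fin n) ℝ) (hPT : Pᵀ = P) (hP2 : P * P = P) :
    ip (X * P) (X * P) ≤ ip X X := by
  have key : ∀ Q : Matrix (Fin n) (Fin n) ℝ, Qᵀ = Q → Q * Q = Q →
      ip (X * Q) (X * Q) = (Xᵀ * X * Q).trace := by
    intro Q hQT hQ2
    rw [ip_eq_trace, transpose_mul, hQT, Matrix.mul_assoc, trace_mul_comm,
      Matrix.mul_assoc, Matrix.mul_assoc, Matrix.mul_assoc, hQ2]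
  have hQT : (1 - P)ᵀ = 1 - P := by rw [transpose_sub, transpose_one, hPT]
  have hQ2 : (1 - P) * (1 - P) = 1 - P := by
    rw [Matrix.sub_mul, Matrix.mul_sub, Matrix.mul_sub, hP2]
    simp
  have hsum : ip (X * P) (X * P) + ip (X * (1 - P)) (X * (1 - P)) = ip X X := by
    rw [key P hPT hP2, key (1 - P) hQT hQ2, ← trace_add, ← Matrix.mul_add]
    simp [ip_eq_trace]
  nlinarith [ip_self_nonneg (X * (1 - P))]

section Ortho
variable (v : Fin n → Fin n → ℝ)
  (hortho : ∀ i j, v i ⬝ᵥ v j = if i = j then (1 : ℝ) else 0)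

include hortho

lemma Mgen_v_one : Mgen v (fun _ => 1) = 1 := by
  have h1 : (Matrix.of v) * (Matrix.of v)ᵀ = 1 := by
    ext i j
    simpa [mul_apply, dotProduct, one_apply] using hortho i j
  have h2 := mul_eq_one_comm.mp h1
  ext a b
  have := congrArg (fun M => M a b) h2
  simp only [mul_apply, transpose_apply, Matrix.of_apply] at this
  simpa [Mgen, Matrix.sum_apply, vecMulVec_apply] using this

lemma parseval (x : Fin n → ℝ) : ∑ i, (v i ⬝ᵥ x) ^ 2 = x ⬝ᵥ x := by
  have := dot_Mgen v (fun _ => 1) x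
  rw [Mgen_v_one v hortho] at this
  simpa using this.symm

lemma ip_Mgen_Mgen (c d : Fin n → ℝ) :
    ip (Mgen v c) (Mgen v d) = ∑ i, c i * d i := by
  rw [ip_eq_trace, Mgen_transpose, trace_Mgen_mul_Mgen]
  refine Finset.sum_congr rfl fun i _ => ?_
  rw [Finset.sum_eq_single i]
  · rw [hortho]; simp
  · intro j _ hj
    rw [hortho]
    simp [Ne.symm hj]
  · simp

end Ortho

lemma exists_ker_onb (Z : Matrix (Fin n) (Fin n) ℝ) :
    ∃ (m : ℕ) (u : Fin m → Fin n → ℝ), m + Z.rank = n ∧ (∀ j, Z *ᵥ u j = 0) ∧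
      (∀ j j', u j ⬝ᵥ u j' = if j = j' then (1:ℝ) else 0) := by
  classical
  let e := (WithLp.linearEquiv 2 ℝ (Fin n → ℝ)).symm
  let K : Submodule ℝ (EuclideanSpace ℝ (Fin n)) :=
    (LinearMap.ker (Matrix.mulVecLin Z)).map e.toLinearMap
  let b := stdOrthonormalBasis ℝ K
  refine ⟨Module.finrank ℝ K, fun j => e.symm ((b j : EuclideanSpace ℝ (Fin n))), ?_, ?_, ?_⟩
  · have h1 : Module.finrank ℝ K = Module.finrank ℝ (LinearMap.ker (Matrix.mulVecLin Z)) :=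
      LinearEquiv.finrank_map_eq e _
    have h2 := LinearMap.finrank_range_add_finrank_ker (Matrix.mulVecLin Z)
    simp only [Module.finrank_pi, Fintype.card_fin] at h2
    rw [h1, Matrix.rank]
    omega
  · intro j
    have hmem : (b j : EuclideanSpace ℝ (Fin n)) ∈ K := (b j).2
    obtain ⟨x, hx, hxe⟩ := hmem
    have : e.symm ((b j : EuclideanSpace ℝ (Fin n))) = x := by
      rw [← hxe]; simp
    show Z *ᵥ (e.symm ((b j : EuclideanSpace ℝ (Fin n)))) = 0
    rw [this]
    simpa [Matrix.mulVecLin] using hx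
  · intro j j'
    have hob := b.orthonormal
    rw [orthonormal_iff_ite] at hob
    have := hob j j'
    rw [Submodule.coe_inner] at this
    rw [← this]
    simp only [PiLp.inner_apply, RCLike.inner_apply, conj_trivial]
    rw [dotProduct]; exact Finset.sum_congr rfl fun x _ => mul_comm _ _

lemma sum_filter_lt {M : Type*} [AddCommMonoid M] {κ : ℕ} (hκ : κ ≤ n) (f : Fin n → M) :
    ∑ i ∈ Finset.univ.filter (fun i : Fin n => (i : ℕ) < κ), f i
      = ∑ j : Fin κ, f (Fin.castLE hκ j) := by
  refine Finset.sum_bij' (i := fun a ha => (⟨(a : ℕ), (Finset.mem_filter.mp ha).2⟩ : Fin κ))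
    (j := fun b _ => Fin.castLE hκ b) ?_ ?_ ?_ ?_ ?_
  all_goals intros; simp_all [Fin.ext_iff]

lemma lp_bound {κ : ℕ} (hκ : κ ≤ n) (g p : Fin n → ℝ)
    (hgmono : ∀ i j : Fin n, i ≤ j → g j ≤ g i) (hg0 : ∀ i, 0 ≤ g i)
    (hp0 : ∀ i, 0 ≤ p i) (hp1 : ∀ i, p i ≤ 1)
    (hps : (n : ℝ) - κ ≤ ∑ i, p i) :
    ∑ i ∈ Finset.univ.filter (fun i : Fin n => ¬ (i : ℕ) < κ), g i ≤ ∑ i, g i * p i := by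
  rcases eq_or_lt_of_le hκ with h | h
  · have hempty : (Finset.univ.filter (fun i : Fin n => ¬ (i : ℕ) < κ)) = ∅ := by
      ext i
      have := i.isLt
      simp only [Finset.mem_filter, Finset.mem_univ, true_and, Finset.notMem_empty, iff_false,
        not_not]
      omega
    rw [hempty, Finset.sum_empty]
    exact Finset.sum_nonneg fun i _ => mul_nonneg (hg0 i) (hp0 i)
  · set t := g ⟨κ, h⟩ with ht
    have ht0 : 0 ≤ t := hg0 _
    have key : ∀ i : Fin n,
        (if ¬ (i : ℕ) < κ then g i else 0) + t * p i
          ≤ g i * p i + (if ¬ (i : ℕ) < κ then t else 0) := by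
      intro i
      by_cases hi : (i : ℕ) < κ
      · simp only [hi, not_true_eq_false, if_false]
        have hgi : t ≤ g i := hgmono i ⟨κ, h⟩ (by simp [Fin.le_def]; omega)
        nlinarith [hp0 i]
      · simp only [hi, not_false_eq_true, if_true]
        have hgi : g i ≤ t := hgmono ⟨κ, h⟩ i (by simp [Fin.le_def]; omega)
        nlinarith [hp1 i, hp0 i]
    have hsum := Finset.sum_le_sum (fun i (_ : i ∈ Finset.univ) => key i)
    rw [Finset.sum_add_distrib, Finset.sum_add_distrib, ← Finset.mul_sum,
      ← Finset.sum_filter, ← Finset.sum_filter] at hsum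
    have hcard : ∑ i ∈ Finset.univ.filter (fun i : Fin n => ¬ (i : ℕ) < κ), t
        = ((n : ℝ) - κ) * t := by
      rw [Finset.sum_const]
      have h2 : (Finset.univ.filter (fun i : Fin n => ¬ (i : ℕ) < κ)).card = n - κ := by
        have := Finset.card_filter_add_card_filter_not
          (s := (Finset.univ : Finset (Fin n))) (p := fun i : Fin n => (i : ℕ) < κ)
        have h3 : (Finset.univ.filter (fun i : Fin n => (i : ℕ) < κ)).card = κ := by
          have := sum_filter_lt hκ (fun _ : Fin n => 1)
          simpa using this
        simp only [Finset.card_univ, Fintype.card_fin] at this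
        omega
      rw [h2, nsmul_eq_mul]
      rw [Nat.cast_sub hκ]
    rw [hcard] at hsum
    nlinarith [mul_le_mul_of_nonneg_left hps ht0]

lemma ip_sub_left (X Y W : Matrix (Fin n) (Fin n) ℝ) :
    ip (X - Y) W = ip X W - ip Y W := by
  simp_rw [ip, Matrix.sub_apply, sub_mul, Finset.sum_sub_distrib]

lemma ip_neg_neg (X : Matrix (Fin n) (Fin n) ℝ) : ip (-X) (-X) = ip X X := by
  simp [ip]

lemma Mgen_sub_Mgen {m : ℕ} (u : Fin m → Fin n → ℝ) (c d : Fin m → ℝ) :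
    Mgen u c - Mgen u d = Mgen u (fun i => c i - d i) := by
  simp [Mgen, ← Finset.sum_sub_distrib, sub_smul]

lemma Mgen_mul_Mgen_of_ortho {m : ℕ} (u : Fin m → Fin n → ℝ)
    (hu : ∀ j j', u j ⬝ᵥ u j' = if j = j' then (1:ℝ) else 0) (c d : Fin m → ℝ) :
    Mgen u c * Mgen u d = Mgen u (fun j => c j * d j) := by
  rw [Mgen_mul_Mgen, Mgen]
  refine Finset.sum_congr rfl fun j _ => ?_
  rw [Finset.sum_eq_single j]
  · rw [hu]; simp
  · intro j' _ hj'
    rw [hu]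
    simp [Ne.symm hj']
  · simp

lemma ip_mul_idem (X Q : Matrix (Fin n) (Fin n) ℝ) (hQT : Qᵀ = Q) (hQ2 : Q * Q = Q) :
    ip (X * Q) (X * Q) = (Xᵀ * X * Q).trace := by
  rw [ip_eq_trace, transpose_mul, hQT, Matrix.mul_assoc, trace_mul_comm,
    Matrix.mul_assoc, Matrix.mul_assoc, Matrix.mul_assoc, hQ2]

lemma dot_idem_nonneg (Q : Matrix (Fin n) (Fin n) ℝ) (hQT : Qᵀ = Q) (hQ2 : Q * Q = Q)
    (x : Fin n → ℝ) : 0 ≤ x ⬝ᵥ (Q *ᵥ x) := by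
  have h : x ⬝ᵥ (Q *ᵥ x) = (Q *ᵥ x) ⬝ᵥ (Q *ᵥ x) := by
    conv_lhs => rw [← hQ2, ← Matrix.mulVec_mulVec, Matrix.dotProduct_mulVec, ← hQT,
      Matrix.vecMul_transpose, hQT]
  rw [h]
  exact Finset.sum_nonneg fun i _ => mul_self_nonneg _

end EigProj

open EigProj

/-- for a symmetric matrix `A = Σ λ_i v_i v_iᵀ` with nonincreasing
eigenvalues and orthonormal eigenvectors, `Â = Σ_{i ≤ κ} max{0, λ_i} v_i v_iᵀ` is a
Frobenius-norm projection of `A` onto the set of symmetric positive semidefinite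
matrices of rank at most `κ`. -/
theorem eigenvalue_truncation_is_psd_lowrank_projection
    {n : ℕ} (κ : ℕ) (hκ : κ ≤ n)
    (lam : Fin n → ℝ) (v : Fin n → Fin n → ℝ)
    (hortho : ∀ i j, v i ⬝ᵥ v j = if i = j then (1 : ℝ) else 0)
    (hord : ∀ i j : Fin n, i ≤ j → lam j ≤ lam i)
    (A : Matrix (Fin n) (Fin n) ℝ)
    (hA : A = ∑ i, lam i • vecMulVec (v i) (v i))
    (Ahat : Matrix (Fin n) (Fin n) ℝ)
    (hAhat : Ahat = ∑ i ∈ Finset.univ.filter (fun i : Fin n => (i : ℕ) < κ),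
      max 0 (lam i) • vecMulVec (v i) (v i)) :
    (Ahat.PosSemidef ∧ Ahat.rank ≤ κ) ∧
      ∀ Z : Matrix (Fin n) (Fin n) ℝ, Z.PosSemidef → Z.rank ≤ κ →
        frobNorm (Ahat - A) ≤ frobNorm (Z - A) := by
  classical
  set mx : Fin n → ℝ := fun i => max 0 (lam i) with hmx
  set chat : Fin n → ℝ := fun i => if (i : ℕ) < κ then mx i else 0 with hchat
  have hA' : A = Mgen v lam := hA
  have hAhat' : Ahat = Mgen v chat := by
    rw [hAhat, Finset.sum_filter, Mgen]
    refine Finset.sum_congr rfl fun i _ => ?_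
    by_cases hi : (i : ℕ) < κ <;> simp [hchat, hmx, hi]
  have hmx0 : ∀ i, 0 ≤ mx i := fun i => le_max_left _ _
  have hchat0 : ∀ i, 0 ≤ chat i := by
    intro i; by_cases hi : (i : ℕ) < κ <;> simp [hchat, hi, hmx0]
  have hzero : ∀ i, mx i * (mx i - lam i) = 0 := by
    intro i
    rcases le_total (lam i) 0 with h | h
    · simp [hmx, max_eq_left h]
    · simp [hmx, max_eq_right h]
  constructor
  · constructor
    · refine posSemidef_iff_dotProduct_mulVec.mpr ⟨?_, ?_⟩
      · show Ahatᴴ = Ahat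
        rw [hAhat']
        ext i j
        rw [conjTranspose_apply]
        have := congrFun (congrFun (Mgen_transpose v chat) i) j
        rw [transpose_apply] at this
        simpa using this
      · intro x
        rw [hAhat']
        have hsx : star x = x := by funext i; simp
        rw [hsx]
        rw [dot_Mgen]
        exact Finset.sum_nonneg fun i _ => mul_nonneg (hchat0 i) (sq_nonneg _)
    · have hFG : Ahat
          = (Matrix.of fun a (j : Fin κ) => chat (Fin.castLE hκ j) * v (Fin.castLE hκ j) a)
            * (Matrix.of fun (j : Fin κ) b => v (Fin.castLE hκ j) b) := by
        rw [hAhat, sum_filter_lt hκ]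
        ext a b
        rw [mul_apply]
        simp only [Matrix.sum_apply, Matrix.smul_apply, vecMulVec_apply, smul_eq_mul, Matrix.of_apply]
        refine Finset.sum_congr rfl fun j _ => ?_
        have hcj : chat (Fin.castLE hκ j) = max 0 (lam (Fin.castLE hκ j)) := by
          simp [hchat, hmx, j.isLt]
        rw [hcj]; ring
      calc Ahat.rank
          = _ := congrArg Matrix.rank hFG
        _ ≤ _ := Matrix.rank_mul_le_left _ _
        _ ≤ Fintype.card (Fin κ) := Matrix.rank_le_card_width _
        _ = κ := Fintype.card_fin κ
  · intro Z hZ hrank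
    obtain ⟨m, u, hmrank, hker, huortho⟩ := exists_ker_onb Z
    have hZT : Zᵀ = Z := by
      ext i j
      have := congrFun (congrFun hZ.1 i) j
      rw [conjTranspose_apply] at this
      simpa using this
    have hZquad : ∀ x : Fin n → ℝ, 0 ≤ x ⬝ᵥ (Z *ᵥ x) := by
      intro x
      have h := hZ.dotProduct_mulVec_nonneg x
      have hsx : star x = x := by funext i; simp
      rwa [hsx] at h
    set Ap : Matrix (Fin n) (Fin n) ℝ := Mgen v mx with hAp
    set P : Matrix (Fin n) (Fin n) ℝ := Mgen u (fun _ => 1) with hP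
    have hPT : Pᵀ = P := Mgen_transpose u _
    have hP2 : P * P = P := by
      rw [hP, Mgen_mul_Mgen_of_ortho u huortho]
      simp [Mgen]
    have hZP : Z * P = 0 := by
      rw [hP, Mgen, Finset.mul_sum]
      refine Finset.sum_eq_zero fun j _ => ?_
      rw [mul_smul_comm, mul_vvT, hker j]
      ext a b
      simp [vecMulVec_apply]
    set p : Fin n → ℝ := fun i => ∑ j, (v i ⬝ᵥ u j) ^ 2 with hp
    have hp0 : ∀ i, 0 ≤ p i := fun i => Finset.sum_nonneg fun j _ => sq_nonneg _
    have hpP : ∀ i, v i ⬝ᵥ (P *ᵥ v i) = p i := by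
      intro i
      rw [hP, dot_Mgen, hp]
      exact Finset.sum_congr rfl fun j _ => by rw [dotProduct_comm, one_mul]
    have hp1 : ∀ i, p i ≤ 1 := by
      intro i
      have hQT : (1 - P)ᵀ = 1 - P := by rw [transpose_sub, transpose_one, hPT]
      have hQ2 : (1 - P) * (1 - P) = 1 - P := by
        rw [Matrix.sub_mul, Matrix.mul_sub, Matrix.mul_sub, hP2]
        simp
      have h0 := dot_idem_nonneg (1 - P) hQT hQ2 (v i)
      rw [Matrix.sub_mulVec, Matrix.one_mulVec, dotProduct_sub, hpP i] at h0
      have h1 : v i ⬝ᵥ v i = 1 := by rw [hortho i i]; simp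
      linarith [h0, h1.ge]
    have hpsum : ∑ i, p i = (m : ℝ) := by
      rw [hp]
      rw [Finset.sum_comm]
      have hone : ∀ j, ∑ i, (v i ⬝ᵥ u j) ^ 2 = (1 : ℝ) := by
        intro j
        rw [parseval v hortho (u j), huortho j j]
        simp
      simp [hone]
    apply frob_le_of_ip_le
    have hAhatA : Ahat - A = Mgen v (fun i => chat i - lam i) := by
      rw [hAhat', hA', Mgen_sub_Mgen]
    have hLHS : ip (Ahat - A) (Ahat - A) = ∑ i, (chat i - lam i) * (chat i - lam i) := by
      rw [hAhatA, ip_Mgen_Mgen v hortho]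
    have hZA : Z - A = (Z - Ap) - (A - Ap) := by abel
    have hRHS : ip (Z - A) (Z - A)
        = ip (Z - Ap) (Z - Ap) - 2 * ip (Z - Ap) (A - Ap) + ip (A - Ap) (A - Ap) := by
      rw [hZA, ip_sub_sub]
    have hAAp : A - Ap = Mgen v (fun i => lam i - mx i) := by
      rw [hA', hAp, Mgen_sub_Mgen]
    have hcross : ip (Z - Ap) (A - Ap) ≤ 0 := by
      rw [ip_sub_left]
      have h1 : ip Z (A - Ap) ≤ 0 := by
        rw [hAAp, ip_eq_trace, hZT, trace_mul_Mgen]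
        refine Finset.sum_nonpos fun j _ => ?_
        have ha : lam j - mx j ≤ 0 := by
          have := le_max_right 0 (lam j)
          simp only [hmx]
          linarith
        nlinarith [hZquad (v j)]
      have h2 : ip Ap (A - Ap) = 0 := by
        rw [hAAp, hAp, ip_Mgen_Mgen v hortho]
        refine Finset.sum_eq_zero fun i _ => ?_
        have := hzero i
        nlinarith [hzero i]
      linarith
    have hApT : Apᵀ = Ap := Mgen_transpose v mx
    have hproj : ∑ i, (mx i * mx i) * p i ≤ ip (Z - Ap) (Z - Ap) := by
      have h1 := ip_proj_le (Z - Ap) P hPT hP2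
      have h2 : (Z - Ap) * P = -(Ap * P) := by
        rw [Matrix.sub_mul, hZP]
        simp
      have h3 : ip ((Z - Ap) * P) ((Z - Ap) * P) = ip (Ap * P) (Ap * P) := by
        rw [h2, ip_neg_neg]
      have h4 : ip (Ap * P) (Ap * P) = (Apᵀ * Ap * P).trace := ip_mul_idem _ _ hPT hP2
      have h5 : Apᵀ * Ap = Mgen v (fun i => mx i * mx i) := by
        rw [hApT, hAp, Mgen_mul_Mgen_of_ortho v hortho]
      have h6 : (Mgen v (fun i => mx i * mx i) * P).trace = ∑ i, (mx i * mx i) * p i := by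
        rw [hP, trace_Mgen_mul_Mgen]
        refine Finset.sum_congr rfl fun i _ => ?_
        rw [hp, Finset.mul_sum]
        exact Finset.sum_congr rfl fun j _ => by ring
      calc ∑ i, (mx i * mx i) * p i
          = ip ((Z - Ap) * P) ((Z - Ap) * P) := by rw [h3, h4, h5, h6]
        _ ≤ ip (Z - Ap) (Z - Ap) := h1
    have hg : ∀ i j : Fin n, i ≤ j → mx j * mx j ≤ mx i * mx i := by
      intro i j hij
      have h1 : mx j ≤ mx i := by
        simp only [hmx]
        exact max_le_max le_rfl (hord i j hij)
      nlinarith [hmx0 i, hmx0 j]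
    have hps : (n : ℝ) - κ ≤ ∑ i, p i := by
      rw [hpsum]
      have h1 : n ≤ m + κ := by omega
      have h2 : (n : ℝ) ≤ (m : ℝ) + κ := by exact_mod_cast h1
      linarith
    have hlp := lp_bound hκ (fun i => mx i * mx i) p hg
      (fun i => mul_self_nonneg _) hp0 hp1 hps
    have hid : ∀ i, (chat i - lam i) * (chat i - lam i)
        = (lam i - mx i) * (lam i - mx i) + (if ¬ (i : ℕ) < κ then mx i * mx i else 0) := by
      intro i
      by_cases hi : (i : ℕ) < κ
      · simp only [hchat, hi, if_true, not_true_eq_false, if_false]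
        ring
      · simp only [hchat, hi, if_false, not_false_eq_true, if_true]
        nlinarith [hzero i]
    have hLHS2 : ∑ i, (chat i - lam i) * (chat i - lam i)
        = ∑ i, (lam i - mx i) * (lam i - mx i)
          + ∑ i ∈ Finset.univ.filter (fun i : Fin n => ¬ (i : ℕ) < κ), mx i * mx i := by
      simp_rw [hid]
      rw [Finset.sum_add_distrib, Finset.sum_filter]
    have hApA : ip (A - Ap) (A - Ap) = ∑ i, (lam i - mx i) * (lam i - mx i) := by
      rw [hAAp, ip_Mgen_Mgen v hortho]
    rw [hLHS, hRHS, hLHS2, hApA]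
    linarith [hcross, hproj, hlp]
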